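/- Let μ be a Borel measure on ℝ finite on bounded sets. Then for μ-almost every x ∈ ℝ, liminf_{r↓0} log μ([x, x+r]) / log r = liminf_{r↓0} log μ([x-r, x+r]) / log r and limsup_{r↓0} log μ([x, x+r]) / log r = limsup_{r↓0} log μ([x-r, x+r]) / log r; i.e., local dimensions on ℝ can be computed via one-sided intervals μ-almost everywhere. -/

import Mathlib

open Set MeasureTheory Filter
open scoped ENNReal Topology

lemma sSup_sandwich {S T : Set ℝ} (hST : S ⊆ T)
    (h : ∀ ε > (0:ℝ), ∀ a ∈ T, a - ε ∈ S) : sSup S = sSup T := by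
  by_cases hTne : T.Nonempty
  · by_cases hTb : BddAbove T
    · have hSne : S.Nonempty := by
        obtain ⟨a, ha⟩ := hTne
        exact ⟨a - 1, h 1 one_pos a ha⟩
      have h1 : sSup S ≤ sSup T := csSup_le_csSup hTb hSne hST
      have h2 : sSup T ≤ sSup S := by
        refine le_of_forall_pos_le_add fun ε hε => ?_
        refine csSup_le hTne fun a ha => ?_
        have : a - ε ∈ S := h ε hε a ha
        have := le_csSup (hTb.mono hST) this
        linarith
      linarith
    · have hSb : ¬ BddAbove S := by
        intro ⟨b, hb⟩
        exact hTb ⟨b + 1, fun a ha => by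
          have := hb (h 1 one_pos a ha); linarith⟩
      rw [Real.sSup_of_not_bddAbove hSb, Real.sSup_of_not_bddAbove hTb]
  · have : S = ∅ := eq_empty_of_subset_empty (by rw [← not_nonempty_iff_eq_empty.mp hTne]; exact hST)
    rw [this, not_nonempty_iff_eq_empty.mp hTne]

lemma sInf_sandwich {S T : Set ℝ} (hST : S ⊆ T)
    (h : ∀ ε > (0:ℝ), ∀ a ∈ T, a + ε ∈ S) : sInf S = sInf T := by
  by_cases hTne : T.Nonempty
  · by_cases hTb : BddBelow T
    · have hSne : S.Nonempty := by
        obtain ⟨a, ha⟩ := hTne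
        exact ⟨a + 1, h 1 one_pos a ha⟩
      have h1 : sInf T ≤ sInf S := csInf_le_csInf hTb hSne hST
      have h2 : sInf S ≤ sInf T := by
        refine le_of_forall_pos_le_add fun ε hε => ?_
        refine sub_le_iff_le_add.mp (le_csInf hTne fun a ha => ?_)
        have : a + ε ∈ S := h ε hε a ha
        have := csInf_le (hTb.mono hST) this
        linarith
      linarith
    · have hSb : ¬ BddBelow S := by
        intro ⟨b, hb⟩
        exact hTb ⟨b - 1, fun a ha => by
          have := hb (h 1 one_pos a ha); linarith⟩
      rw [Real.sInf_of_not_bddBelow hSb, Real.sInf_of_not_bddBelow hTb]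
  · have : S = ∅ := eq_empty_of_subset_empty (by rw [← not_nonempty_iff_eq_empty.mp hTne]; exact hST)
    rw [this, not_nonempty_iff_eq_empty.mp hTne]

lemma liminf_limsup_sandwich {f g : ℝ → ℝ} {l : Filter ℝ}
    (h : ∀ ε > (0:ℝ), ∀ᶠ x in l, g x ≤ f x ∧ f x ≤ g x + ε) :
    liminf f l = liminf g l ∧ limsup f l = limsup g l := by
  constructor
  · rw [liminf_eq, liminf_eq]
    refine (sSup_sandwich ?_ ?_).symm
    · intro a ha
      filter_upwards [ha, h 1 one_pos] with x hx ⟨h1, _⟩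
      exact hx.trans h1
    · intro ε hε a ha
      filter_upwards [ha, h ε hε] with x hx ⟨_, h2⟩
      linarith
  · rw [limsup_eq, limsup_eq]
    refine sInf_sandwich ?_ ?_
    · intro a ha
      filter_upwards [ha, h 1 one_pos] with x hx ⟨h1, _⟩
      exact h1.trans hx
    · intro ε hε a ha
      filter_upwards [ha, h ε hε] with x hx ⟨_, h2⟩
      linarith

lemma ae_right_pos (μ : Measure ℝ) : ∀ᵐ x ∂μ, ∀ r > (0:ℝ), μ (Icc x (x + r)) ≠ 0 := by
  set U : Set ℝ := ⋃ p ∈ {p : ℚ × ℚ | μ (Ioo (p.1:ℝ) (p.2:ℝ)) = 0}, Ioo (p.1:ℝ) (p.2:ℝ) with hUdef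
  have hU : μ U = 0 := (measure_biUnion_null_iff (Set.to_countable _)).mpr fun p hp => hp
  have hNq : ∀ q : ℚ, 0 < q → μ {x : ℝ | μ (Icc x (x + (q:ℝ))) = 0} = 0 := by
    intro q hq
    have hq' : (0:ℝ) < q := by exact_mod_cast hq
    set N := {x : ℝ | μ (Icc x (x + (q:ℝ))) = 0} with hN
    have hsub : ∀ x ∈ N, Ioo x (x + (q:ℝ)) ⊆ U := by
      intro x hx y hy
      obtain ⟨a, ha1, ha2⟩ := exists_rat_btwn hy.1
      obtain ⟨b, hb1, hb2⟩ := exists_rat_btwn hy.2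
      refine mem_biUnion (show (a,b) ∈ _ from ?_) (⟨ha2, hb1⟩ : y ∈ Ioo (a:ℝ) (b:ℝ))
      simp only [mem_setOf_eq]
      refine le_antisymm (le_trans (measure_mono ?_) (le_of_eq hx)) zero_le
      intro z hz
      exact ⟨le_of_lt (lt_trans ha1 hz.1), le_of_lt (lt_trans hz.2 hb2)⟩
    have hDc : (N \ U).Countable := by
      refine Set.PairwiseDisjoint.countable_of_isOpen (s := fun x => Ioo x (x + (q:ℝ)))
        ?_ (fun x _ => isOpen_Ioo) (fun x _ => nonempty_Ioo.mpr (by linarith))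
      intro x hx y hy hxy
      rcases lt_or_gt_of_ne hxy with h | h
      · have : x + (q:ℝ) ≤ y := by
          by_contra hc
          exact hy.2 (hsub x hx.1 ⟨h, not_le.mp hc⟩)
        exact Set.disjoint_left.mpr fun z hz hz' => absurd hz'.1 (not_lt.mpr (hz.2.le.trans this))
      · have : y + (q:ℝ) ≤ x := by
          by_contra hc
          exact hx.2 (hsub y hy.1 ⟨h, not_le.mp hc⟩)
        exact Set.disjoint_left.mpr fun z hz hz' => absurd hz.1 (not_lt.mpr (hz'.2.le.trans this))
    have hD : μ (N \ U) = 0 := by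
      refine measure_mono_null (show N \ U ⊆ ⋃ x ∈ N \ U, {x} from ?_) ?_
      · intro x hx; exact mem_biUnion hx rfl
      · refine (measure_biUnion_null_iff hDc).mpr fun x hx => ?_
        refine le_antisymm (le_trans (measure_mono ?_) (le_of_eq hx.1)) zero_le
        exact singleton_subset_iff.mpr ⟨le_refl x, by linarith⟩
    have : N ⊆ (N \ U) ∪ U := fun x hx => by
      by_cases h : x ∈ U
      · exact Or.inr h
      · exact Or.inl ⟨hx, h⟩
    refine measure_mono_null this ?_
    rw [← nonpos_iff_eq_zero]
    calc μ ((N \ U) ∪ U) ≤ μ (N \ U) + μ U := measure_union_le _ _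
      _ = 0 := by rw [hD, hU, add_zero]
  have key : ∀ᵐ x ∂μ, ∀ q : ℚ, 0 < q → μ (Icc x (x + (q:ℝ))) ≠ 0 := by
    rw [ae_iff]
    refine measure_mono_null (show _ ⊆ ⋃ q ∈ {q : ℚ | 0 < q}, {x : ℝ | μ (Icc x (x + (q:ℝ))) = 0} from ?_) ?_
    · intro x hx
      simp only [mem_setOf_eq, not_forall] at hx
      obtain ⟨q, hq, hq0⟩ := hx
      exact mem_biUnion hq (not_ne_iff.mp hq0)
    · exact (measure_biUnion_null_iff (Set.to_countable _)).mpr fun q hq => hNq q hq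
  filter_upwards [key] with x hx r hr h0
  obtain ⟨q, hq1, hq2⟩ := exists_rat_btwn hr
  have hq0 : 0 < q := by exact_mod_cast hq1
  exact hx q hq0 (le_antisymm (le_trans (measure_mono (Icc_subset_Icc_right (by linarith))) (le_of_eq h0)) zero_le)

lemma cell_bound (μ : Measure ℝ) {δ : ℝ≥0∞} {ρ : ℝ} (hρ : 0 < ρ) {B : Set ℝ}
    {S : Set ℝ} {k : ℤ} (hcell : S ⊆ Ico ((k:ℝ)*(ρ/2)) ((k+1:ℝ)*(ρ/2)))
    (hwit : ∀ x ∈ S, ∃ r, r ∈ Ioc (ρ/2) ρ ∧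
      μ (Icc x (x+r)) < δ * μ (Icc (x-r) (x+r)) ∧ Icc (x-r) (x+r) ⊆ B) :
    μ S ≤ 2 * δ * μ B := by
  rcases S.eq_empty_or_nonempty with hSe | hS
  · simp [hSe]
  set h := ρ / 2 with hh
  have hhpos : 0 < h := by positivity
  set b := ((k:ℝ)+1) * h with hb
  have key : ∀ x ∈ S, ∀ x', x ≤ x' → μ (Icc x' b) ≤ δ * μ B := by
    intro x hx x' hxx'
    obtain ⟨r, hr, hlt, hB⟩ := hwit x hx
    have hxk : (k:ℝ) * h ≤ x := (hcell hx).1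
    have hsub : Icc x' b ⊆ Icc x (x + r) := by
      apply Icc_subset_Icc hxx'
      have : b = (k:ℝ)*h + h := by ring
      rw [this]
      have := hr.1
      linarith
    calc μ (Icc x' b) ≤ μ (Icc x (x+r)) := measure_mono hsub
      _ ≤ δ * μ (Icc (x-r) (x+r)) := hlt.le
      _ ≤ δ * μ B := mul_le_mul_right (measure_mono hB) δ
  have hbdd : BddBelow S := ⟨(k:ℝ)*h, fun x hx => (hcell hx).1⟩
  set i := sInf S with hi
  have hile : ∀ x ∈ S, i ≤ x := fun x hx => csInf_le hbdd hx
  have hxb : ∀ x ∈ S, x < b := fun x hx => by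
    have := (hcell hx).2; convert this using 2
  have hIoo : μ (Ioo i b) ≤ δ * μ B := by
    rcases le_or_gt b i with hbi | hib
    · rw [Ioo_eq_empty (not_lt.mpr hbi)]
      simp
    · set f : ℕ → Set ℝ := fun m => Icc (i + (b - i)/(m+1)) b with hf
      have hmono : Monotone f := by
        intro m m' hmm
        apply Icc_subset_Icc_left
        apply add_le_add_right
        apply div_le_div_of_nonneg_left (by linarith) (by positivity)
        exact_mod_cast by exact_mod_cast add_le_add_left (Nat.cast_le.mpr hmm) 1
      have hcover : Ioo i b ⊆ ⋃ m, f m := by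
        intro y hy
        have hyi : 0 < y - i := by linarith [hy.1]
        obtain ⟨m, hm⟩ := exists_nat_ge ((b - i)/(y - i))
        refine mem_iUnion.mpr ⟨m, ?_, hy.2.le⟩
        have h1 : b - i ≤ (y - i) * ((m:ℝ)+1) := by
          rw [div_le_iff₀ hyi] at hm
          nlinarith
        have : (b - i)/((m:ℝ)+1) ≤ y - i := by
          rw [div_le_iff₀ (by positivity)]
          linarith
        linarith
      calc μ (Ioo i b) ≤ μ (⋃ m, f m) := measure_mono hcover
        _ = ⨆ m, μ (f m) := hmono.measure_iUnion
        _ ≤ δ * μ B := by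
            refine iSup_le fun m => ?_
            have hc : 0 < (b - i)/((m:ℝ)+1) := div_pos (by linarith) (by positivity)
            obtain ⟨x, hxS, hxlt⟩ := Real.lt_sInf_add_pos hS hc
            exact key x hxS _ hxlt.le
  by_cases hiS : i ∈ S
  · have hsub : S ⊆ {i} ∪ Ioo i b := by
      intro x hx
      rcases eq_or_lt_of_le (hile x hx) with he | hlt
      · exact Or.inl (by simp [← he])
      · exact Or.inr ⟨hlt, hxb x hx⟩
    have hsing : μ {i} ≤ δ * μ B := by
      refine le_trans (measure_mono ?_) (key i hiS i le_rfl)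
      exact singleton_subset_iff.mpr ⟨le_rfl, (hxb i hiS).le⟩
    calc μ S ≤ μ ({i} ∪ Ioo i b) := measure_mono hsub
      _ ≤ μ {i} + μ (Ioo i b) := measure_union_le _ _
      _ ≤ δ * μ B + δ * μ B := add_le_add hsing hIoo
      _ = 2 * δ * μ B := by ring
  · have hsub : S ⊆ Ioo i b := fun x hx =>
      ⟨lt_of_le_of_ne (hile x hx) (fun he => hiS (he ▸ hx)), hxb x hx⟩
    calc μ S ≤ μ (Ioo i b) := measure_mono hsub
      _ ≤ δ * μ B := hIoo
      _ ≤ 2 * δ * μ B := by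
          rw [two_mul, add_mul]
          exact le_add_self

lemma scale_bound (μ : Measure ℝ) {δ : ℝ≥0∞} {ρ : ℝ} (hρ : 0 < ρ) (hρ1 : ρ ≤ 1) (M : ℕ) :
    μ ({x : ℝ | ∃ r ∈ Ioc (ρ/2) ρ, μ (Icc x (x+r)) < δ * μ (Icc (x-r) (x+r))}
        ∩ Icc (-(M:ℝ)) M)
      ≤ 12 * δ * μ (Icc (-(M:ℝ)-3) ((M:ℝ)+3)) := by
  set E := {x : ℝ | ∃ r ∈ Ioc (ρ/2) ρ, μ (Icc x (x+r)) < δ * μ (Icc (x-r) (x+r))} with hE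
  set W : Set ℝ := Icc (-(M:ℝ)) M with hW
  set BW : Set ℝ := Icc (-(M:ℝ)-3) ((M:ℝ)+3) with hBW
  set h := ρ / 2 with hh
  have hhpos : 0 < h := by positivity
  set G : ℤ → Set ℝ := fun k => Ico ((k:ℝ)*h) (((k:ℝ)+1)*h) with hG
  -- cover by cells
  have hcover : E ∩ W ⊆ ⋃ k : ℤ, (E ∩ W ∩ G k) := by
    intro x hx
    refine mem_iUnion.mpr ⟨⌊x/h⌋, hx, ?_⟩
    constructor
    · rw [← le_div_iff₀ hhpos]; exact Int.floor_le _
    · rw [← div_lt_iff₀ hhpos]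
      have := Int.lt_floor_add_one (x/h); push_cast; push_cast at this; linarith
  -- per cell
  have hcell : ∀ k : ℤ, μ (E ∩ W ∩ G k)
      ≤ 2 * δ * μ (Icc ((k:ℝ)*h - 2*h) ((k:ℝ)*h + 3*h) ∩ BW) := by
    intro k
    refine cell_bound μ hρ (fun x hx => inter_subset_right hx) ?_
    rintro x ⟨⟨hxE, hxW⟩, hxG⟩
    obtain ⟨r, hr, hlt⟩ := hxE
    refine ⟨r, hr, hlt, ?_⟩
    intro y hy
    have h1 : (k:ℝ)*h ≤ x := hxG.1
    have h2 : x < ((k:ℝ)+1)*h := hxG.2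
    have hr2 : r ≤ 2*h := by rw [hh]; linarith [hr.2]
    have hrpos : 0 < r := lt_trans hhpos hr.1
    constructor
    · constructor <;> [skip; skip]
      · cases hy; linarith
      · cases hy; linarith
    · have hxM : -(M:ℝ) ≤ x := hxW.1
      have hxM' : x ≤ M := hxW.2
      have : ρ ≤ 1 := hρ1
      cases hy
      constructor <;> [linarith; linarith]
  -- sum the B_k ∩ BW
  have hBsum : ∑' k : ℤ, μ (Icc ((k:ℝ)*h - 2*h) ((k:ℝ)*h + 3*h) ∩ BW) ≤ 6 * μ BW := by
    have hsub : ∀ k : ℤ, Icc ((k:ℝ)*h - 2*h) ((k:ℝ)*h + 3*h) ∩ BW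
        ⊆ ⋃ d ∈ Finset.range 6, (Ico (((k + ((d:ℤ) - 2)):ℤ) * h) ((((k + ((d:ℤ) - 2)):ℤ) + 1) * h) ∩ BW) := by
      intro k y ⟨hy1, hy2⟩
      have : y ∈ Ico ((k:ℝ)*h - 2*h) ((k:ℝ)*h + 4*h) := ⟨hy1.1, by linarith [hy1.2]⟩
      set j : ℤ := ⌊y/h⌋ with hj
      have hjy : (j:ℝ)*h ≤ y := by rw [← le_div_iff₀ hhpos]; exact Int.floor_le _
      have hjy' : y < ((j:ℝ)+1)*h := by
        rw [← div_lt_iff₀ hhpos]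
        have := Int.lt_floor_add_one (y/h); push_cast; push_cast at this; linarith
      have hjlb : k - 2 ≤ j := by
        have : ((k:ℝ) - 2) * h ≤ y := by push_cast; linarith [this.1]
        have h2 : ((k:ℝ) - 2) < (j:ℝ) + 1 := by
          by_contra hc
          push_neg at hc
          nlinarith
        have : (k:ℤ) - 2 < j + 1 := by exact_mod_cast h2
        omega
      have hjub : j ≤ k + 3 := by
        have hyub : y < ((k:ℝ) + 4) * h := by push_cast; linarith [this.2]
        have h2 : (j:ℝ) < (k:ℝ) + 4 := by nlinarith
        have : j < k + 4 := by exact_mod_cast h2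
        omega
      refine mem_iUnion₂.mpr ⟨(j - (k - 2)).toNat, Finset.mem_range.mpr (by omega), ?_⟩
      have hid : k + (((j - (k-2)).toNat : ℤ) - 2) = j := by omega
      rw [hid]
      exact ⟨⟨hjy, hjy'⟩, hy2⟩
    calc ∑' k : ℤ, μ (Icc ((k:ℝ)*h - 2*h) ((k:ℝ)*h + 3*h) ∩ BW)
        ≤ ∑' k : ℤ, ∑ d ∈ Finset.range 6,
            μ (Ico (((k + ((d:ℤ) - 2)):ℤ) * h) ((((k + ((d:ℤ) - 2)):ℤ) + 1) * h) ∩ BW) := by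
          refine ENNReal.tsum_le_tsum fun k => ?_
          exact le_trans (measure_mono (hsub k)) (measure_biUnion_finset_le _ _)
      _ = ∑ d ∈ Finset.range 6, ∑' k : ℤ,
            μ (Ico (((k + ((d:ℤ) - 2)):ℤ) * h) ((((k + ((d:ℤ) - 2)):ℤ) + 1) * h) ∩ BW) := by
          exact Summable.tsum_finsetSum fun d _ => ENNReal.summable
      _ ≤ ∑ d ∈ Finset.range 6, μ BW := by
          refine Finset.sum_le_sum fun d _ => ?_
          have hre : ∑' k : ℤ, μ (Ico (((k + ((d:ℤ) - 2)):ℤ) * h) ((((k + ((d:ℤ) - 2)):ℤ) + 1) * h) ∩ BW)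
              = ∑' m : ℤ, μ (Ico ((m:ℤ) * h) (((m:ℤ) + 1) * h) ∩ BW) :=
            (Equiv.addRight ((d:ℤ) - 2)).tsum_eq
              (fun m => μ (Ico ((m:ℤ) * h) (((m:ℤ) + 1) * h) ∩ BW))
          rw [hre]
          have hdisj : Pairwise (Function.onFun Disjoint
              (fun m : ℤ => Ico ((m:ℤ) * h) (((m:ℤ) + 1) * h) ∩ BW)) := by
            intro m m' hne
            refine Disjoint.mono inter_subset_left inter_subset_left ?_
            rcases lt_or_gt_of_ne hne with hlt | hlt
            · rw [Set.Ico_disjoint_Ico]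
              have : ((m:ℝ)+1) ≤ (m':ℝ) := by exact_mod_cast hlt
              refine le_trans (min_le_left _ _) (le_trans ?_ (le_max_right _ _))
              push_cast; nlinarith
            · rw [Set.Ico_disjoint_Ico]
              have : ((m':ℝ)+1) ≤ (m:ℝ) := by exact_mod_cast hlt
              refine le_trans (min_le_right _ _) (le_trans ?_ (le_max_left _ _))
              push_cast; nlinarith
          have := measure_iUnion (μ := μ) hdisj
            (fun m => (measurableSet_Ico.inter measurableSet_Icc))
          rw [← this]
          exact measure_mono (iUnion_subset fun m => inter_subset_right)
      _ = 6 * μ BW := by simp [Finset.sum_const]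
  calc μ (E ∩ W) ≤ ∑' k : ℤ, μ (E ∩ W ∩ G k) :=
        le_trans (measure_mono hcover) (measure_iUnion_le _)
    _ ≤ ∑' k : ℤ, 2 * δ * μ (Icc ((k:ℝ)*h - 2*h) ((k:ℝ)*h + 3*h) ∩ BW) :=
        ENNReal.tsum_le_tsum hcell
    _ = 2 * δ * ∑' k : ℤ, μ (Icc ((k:ℝ)*h - 2*h) ((k:ℝ)*h + 3*h) ∩ BW) :=
        ENNReal.tsum_mul_left
    _ ≤ 2 * δ * (6 * μ BW) := mul_le_mul_right hBsum _
    _ = 12 * δ * μ BW := by ring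

lemma ae_eventually_comparable (μ : Measure ℝ)
    (hfin : ∀ s : Set ℝ, Bornology.IsBounded s → μ s < ⊤) {ε : ℝ} (hε : 0 < ε) :
    ∀ᵐ x ∂μ, ∀ᶠ r in 𝓝[>] (0:ℝ),
      ENNReal.ofReal (r ^ ε) * μ (Icc (x - r) (x + r)) ≤ μ (Icc x (x + r)) := by
  classical
  set c : ℝ := (1/2:ℝ) ^ ε with hc
  have hc0 : 0 ≤ c := Real.rpow_nonneg (by norm_num) _
  have hc1 : c < 1 := Real.rpow_lt_one (by norm_num) (by norm_num) hε
  set δ : ℕ → ℝ≥0∞ := fun n => ENNReal.ofReal (((1/2:ℝ)^n : ℝ) ^ ε) with hδ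
  have hδc : ∀ n, δ n = (ENNReal.ofReal c)^n := by
    intro n
    have h1 : ((1/2:ℝ)^n : ℝ) ^ ε = c^n := by
      rw [← Real.rpow_natCast (1/2:ℝ) n, ← Real.rpow_natCast c n, hc,
        ← Real.rpow_mul (by norm_num), ← Real.rpow_mul (by norm_num), mul_comm]
    simp only [hδ, h1, ENNReal.ofReal_pow hc0]
  have htsum : ∑' n, δ n ≠ ⊤ := by
    simp_rw [hδc]
    rw [ENNReal.tsum_geometric]
    refine ENNReal.inv_ne_top.mpr ?_
    rw [← pos_iff_ne_zero]
    exact tsub_pos_iff_lt.mpr (by exact_mod_cast ENNReal.ofReal_lt_one.mpr hc1)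
  set E : ℕ → Set ℝ := fun n =>
    {x : ℝ | ∃ r ∈ Ioc ((1/2:ℝ)^n/2) ((1/2:ℝ)^n),
      μ (Icc x (x+r)) < δ n * μ (Icc (x-r) (x+r))} with hE
  have hkey : ∀ M : ℕ, ∀ᵐ x ∂μ, x ∉ limsup (fun n => E n ∩ Icc (-(M:ℝ)) M) atTop := by
    intro M
    rw [← measure_eq_zero_iff_ae_notMem]
    refine measure_limsup_atTop_eq_zero ?_
    have hb : ∀ n, μ (E n ∩ Icc (-(M:ℝ)) M)
        ≤ 12 * δ n * μ (Icc (-(M:ℝ)-3) ((M:ℝ)+3)) := fun n =>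
      scale_bound μ (by positivity) (pow_le_one₀ (by norm_num) (by norm_num)) M
    refine ne_top_of_le_ne_top ?_ (ENNReal.tsum_le_tsum hb)
    have : ∑' n, 12 * δ n * μ (Icc (-(M:ℝ)-3) ((M:ℝ)+3))
        = 12 * μ (Icc (-(M:ℝ)-3) ((M:ℝ)+3)) * ∑' n, δ n := by
      rw [← ENNReal.tsum_mul_left]
      congr 1; ext n; ring
    rw [this]
    exact ENNReal.mul_ne_top (ENNReal.mul_ne_top (by norm_num)
      (hfin _ (Metric.isBounded_Icc _ _)).ne) htsum
  rw [← ae_all_iff] at hkey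
  filter_upwards [hkey] with x hx
  obtain ⟨M, hM⟩ := exists_nat_ge |x| 
  have hxW : x ∈ Icc (-(M:ℝ)) M := ⟨neg_le_of_abs_le hM, le_of_abs_le hM⟩
  have hx2 : ∀ᶠ n in atTop, x ∉ E n := by
    have := hx M
    rw [mem_limsup_iff_frequently_mem, not_frequently] at this
    filter_upwards [this] with n hn hc
    exact hn ⟨hc, hxW⟩
  obtain ⟨N, hN⟩ := eventually_atTop.mp hx2
  have hmem : Ioc (0:ℝ) ((1/2:ℝ)^(N+1)) ∈ 𝓝[>] (0:ℝ) :=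
    Ioc_mem_nhdsGT_of_mem ⟨le_refl 0, by positivity⟩
  filter_upwards [hmem] with r hr
  obtain ⟨hr0, hrN⟩ := hr
  -- find the scale n
  have hex : ∃ m : ℕ, (1/2:ℝ)^m < r := exists_pow_lt_of_lt_one hr0 (by norm_num)
  have hPn₀' : (1/2:ℝ)^(Nat.find hex) < r := Nat.find_spec hex
  have hn₀pos : Nat.find hex ≠ 0 := by
    intro h0
    rw [h0] at hPn₀'
    simp at hPn₀'
    have : ((1/2:ℝ))^(N+1) ≤ 1 := pow_le_one₀ (by norm_num) (by norm_num)
    linarith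
  set n := Nat.find hex - 1 with hn
  have heq : Nat.find hex = n + 1 := by omega
  have hPn₀ : (1/2:ℝ)^(n+1) < r := by rw [← heq]; exact hPn₀'
  have hrle : r ≤ (1/2:ℝ)^n := not_lt.mp (Nat.find_min hex (by omega))
  have hrIoc : r ∈ Ioc ((1/2:ℝ)^n/2) ((1/2:ℝ)^n) := by
    refine ⟨?_, hrle⟩
    have : (1/2:ℝ)^(n+1) = (1/2:ℝ)^n/2 := by rw [pow_succ]; ring
    linarith [hPn₀, this]
  have hnN : N ≤ n := by
    have hlt : (1/2:ℝ)^(n+1) < (1/2:ℝ)^(N+1) := lt_of_lt_of_le hPn₀ hrN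
    have := (pow_lt_pow_iff_right_of_lt_one₀ (by norm_num : (0:ℝ) < 1/2)
      (by norm_num)).mp hlt
    omega
  have hxE : x ∉ E n := hN n hnN
  rw [hE, mem_setOf_eq] at hxE
  push_neg at hxE
  have hge : δ n * μ (Icc (x-r) (x+r)) ≤ μ (Icc x (x+r)) := hxE r hrIoc
  refine le_trans (mul_le_mul_left ?_ _) hge
  exact ENNReal.ofReal_le_ofReal (Real.rpow_le_rpow hr0.le hrle hε.le)

/-- For a Borel measure `μ` on `ℝ` finite on bounded sets, for `μ`-a.e. `x` the
upper and lower local dimensions of `μ` at `x` can be computed using the one-sided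
intervals `[x, x+r]` in place of the two-sided intervals `[x-r, x+r]`. -/
theorem stmt_7 (μ : Measure ℝ)
    (hfin : ∀ s : Set ℝ, Bornology.IsBounded s → μ s < ⊤) :
    ∀ᵐ x ∂μ,
      liminf (fun r : ℝ => Real.log (μ (Icc x (x + r))).toReal / Real.log r) (𝓝[>] 0)
        = liminf (fun r : ℝ =>
            Real.log (μ (Icc (x - r) (x + r))).toReal / Real.log r) (𝓝[>] 0) ∧
      limsup (fun r : ℝ => Real.log (μ (Icc x (x + r))).toReal / Real.log r) (𝓝[>] 0)
        = limsup (fun r : ℝ =>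
            Real.log (μ (Icc (x - r) (x + r))).toReal / Real.log r) (𝓝[>] 0) := by
  have hcomp : ∀ᵐ x ∂μ, ∀ k : ℕ, ∀ᶠ r in 𝓝[>] (0:ℝ),
      ENNReal.ofReal (r ^ (1/((k:ℝ)+1))) * μ (Icc (x - r) (x + r)) ≤ μ (Icc x (x + r)) :=
    ae_all_iff.mpr fun k => ae_eventually_comparable μ hfin (by positivity)
  filter_upwards [ae_right_pos μ, hcomp] with x hpos hx
  refine liminf_limsup_sandwich ?_
  intro ε hε
  obtain ⟨k, hk⟩ := exists_nat_gt (1/ε)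
  have hε' : (0:ℝ) < 1/((k:ℝ)+1) := by positivity
  have hε'ε : 1/((k:ℝ)+1) ≤ ε := by
    rw [div_le_iff₀ (by positivity)]
    rw [div_lt_iff₀ hε] at hk
    nlinarith
  filter_upwards [hx k, Ioo_mem_nhdsGT_of_mem (⟨le_refl (0:ℝ), one_pos⟩ : (0:ℝ) ∈ Ico (0:ℝ) 1)]
    with r hr hr01
  obtain ⟨hr0, hr1⟩ := hr01
  set ε' := 1/((k:ℝ)+1) with hε'def
  have hbig_ne_top : μ (Icc (x-r) (x+r)) ≠ ⊤ := (hfin _ (Metric.isBounded_Icc _ _)).ne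
  have hsub : Icc x (x+r) ⊆ Icc (x-r) (x+r) := Icc_subset_Icc (by linarith) le_rfl
  have hsmall_ne_top : μ (Icc x (x+r)) ≠ ⊤ :=
    ne_top_of_le_ne_top hbig_ne_top (measure_mono hsub)
  set a := (μ (Icc x (x+r))).toReal with ha
  set b := (μ (Icc (x-r) (x+r))).toReal with hb
  have ha_pos : 0 < a := ENNReal.toReal_pos (hpos r hr0) hsmall_ne_top
  have hab : a ≤ b := ENNReal.toReal_mono hbig_ne_top (measure_mono hsub)
  have hb_pos : 0 < b := lt_of_lt_of_le ha_pos hab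
  have hlogr : Real.log r < 0 := Real.log_neg hr0 hr1
  constructor
  · exact (div_le_div_right_of_neg hlogr).mpr (Real.log_le_log ha_pos hab)
  · have hcompr : r ^ ε' * b ≤ a := by
      have h1 := ENNReal.toReal_mono hsmall_ne_top hr
      rwa [ENNReal.toReal_mul, ENNReal.toReal_ofReal (Real.rpow_nonneg hr0.le _)] at h1
    have hrpow_pos : 0 < r ^ ε' := Real.rpow_pos_of_pos hr0 _
    have hlog : ε' * Real.log r + Real.log b ≤ Real.log a := by
      have := Real.log_le_log (by positivity) hcompr
      rwa [Real.log_mul hrpow_pos.ne' hb_pos.ne', Real.log_rpow hr0] at this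
    have hdiv : Real.log a / Real.log r ≤ (ε' * Real.log r + Real.log b) / Real.log r :=
      (div_le_div_right_of_neg hlogr).mpr hlog
    have heq : (ε' * Real.log r + Real.log b) / Real.log r = ε' + Real.log b / Real.log r := by
      rw [add_div, mul_div_assoc, div_self hlogr.ne, mul_one]
    calc Real.log a / Real.log r ≤ ε' + Real.log b / Real.log r := by rw [← heq]; exact hdiv
      _ ≤ Real.log b / Real.log r + ε := by linarith
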